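/- Let u₀ : ℝ → ℂ be a Schwartz function and ζ ∈ ℝ. Set P(x) = [[0, u₀(x)],[−conj(u₀(x)), 0]] and Λ = diag(1,−1). Then the matrix Volterra equation G(x) = I − ∫ₓ^∞ exp(−iζ(x−ξ)Λ)·P(ξ)G(ξ)·exp(iζ(x−ξ)Λ) dξ has a unique bounded continuous solution G : [0,∞) → M₂(ℂ); this solution satisfies det G(x) = 1 for all x ≥ 0, together with the symmetries G₁₁(x) = conj(G₂₂(x)) and G₂₁(x) = −conj(G₁₂(x)); consequently the spectral functions y(ζ) = G₂₂(0) and z(ζ) = G₁₂(0) satisfy |y(ζ)|² + |z(ζ)|² = 1. -/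

import Mathlib

open MeasureTheory Matrix

/-- `P(x) = [[0, u₀(x)],[−conj(u₀(x)), 0]]`. -/
noncomputable def Pm (u₀ : SchwartzMap ℝ ℂ) (x : ℝ) : Matrix (Fin 2) (Fin 2) ℂ :=
  !![0, u₀ x; -(starRingEnd ℂ) (u₀ x), 0]

/-- The integrand `exp(−iζ(x−ξ)Λ) · P(ξ)G(ξ) · exp(iζ(x−ξ)Λ)`, where
`exp(cΛ) = diag(e^c, e^{−c})` for `Λ = diag(1,−1)`. -/
noncomputable def Km (u₀ : SchwartzMap ℝ ℂ) (ζ : ℂ) (G : ℝ → Matrix (Fin 2) (Fin 2) ℂ)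
    (x ξ : ℝ) : Matrix (Fin 2) (Fin 2) ℂ :=
  !![Complex.exp (-(Complex.I * ζ * ((x - ξ : ℝ) : ℂ))), 0;
     0, Complex.exp (Complex.I * ζ * ((x - ξ : ℝ) : ℂ))] *
    (Pm u₀ ξ * G ξ) *
    !![Complex.exp (Complex.I * ζ * ((x - ξ : ℝ) : ℂ)), 0;
       0, Complex.exp (-(Complex.I * ζ * ((x - ξ : ℝ) : ℂ)))]

/-- `G` is a bounded continuous solution on `[0,∞)` of the matrix Volterra equation
`G(x) = I − ∫ₓ^∞ exp(−iζ(x−ξ)Λ)·P(ξ)G(ξ)·exp(iζ(x−ξ)Λ) dξ` (entrywise, with absolutely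
convergent integrals). -/
def IsMatrixVolterraSol (u₀ : SchwartzMap ℝ ℂ) (ζ : ℂ)
    (G : ℝ → Matrix (Fin 2) (Fin 2) ℂ) : Prop :=
  (∀ i j : Fin 2, ContinuousOn (fun x => G x i j) (Set.Ici 0)) ∧
  (∃ C : ℝ, ∀ x ≥ (0 : ℝ), ∀ i j : Fin 2, ‖G x i j‖ ≤ C) ∧
  ∀ x ≥ (0 : ℝ), ∀ i j : Fin 2,
    IntegrableOn (fun ξ => Km u₀ ζ G x ξ i j) (Set.Ioi x) ∧
    G x i j = (1 : Matrix (Fin 2) (Fin 2) ℂ) i j - ∫ ξ in Set.Ioi x, Km u₀ ζ G x ξ i j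

open Set
set_option linter.unusedSectionVars false
set_option maxHeartbeats 1000000

section Tail

variable {E : Type*} [NormedAddCommGroup E] [NormedSpace ℝ E] [CompleteSpace E] {h : ℝ → E}

theorem tail_eq (hint : Integrable h) (x : ℝ) :
    ∫ ξ in Ioi x, h ξ = (∫ ξ in Ioi (0:ℝ), h ξ) - ∫ ξ in (0:ℝ)..x, h ξ := by
  have h1 := intervalIntegral.integral_Iic_add_Ioi (μ := volume) (b := x) (f := h)
    hint.integrableOn hint.integrableOn
  have h2 := intervalIntegral.integral_Iic_add_Ioi (μ := volume) (b := (0:ℝ)) (f := h)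
    hint.integrableOn hint.integrableOn
  have h3 := intervalIntegral.integral_Iic_sub_Iic (μ := volume) (f := h) (a := (0:ℝ)) (b := x)
    hint.integrableOn hint.integrableOn
  rw [← h3]
  have h4 := h1.trans h2.symm
  have : ∫ ξ in Ioi x, h ξ = ((∫ x in Iic x, h x) + ∫ x in Ioi x, h x) - ∫ x in Iic x, h x := by
    abel
  rw [this, h4]; abel

theorem tail_cont (hint : Integrable h) : Continuous (fun x => ∫ ξ in Ioi x, h ξ) := by
  have : (fun x => ∫ ξ in Ioi x, h ξ)
      = fun x => (∫ ξ in Ioi (0:ℝ), h ξ) - ∫ ξ in (0:ℝ)..x, h ξ := funext (tail_eq hint)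
  rw [this]
  exact continuous_const.sub (hint.continuous_primitive 0)

theorem tail_tendsto (hint : Integrable h) :
    Filter.Tendsto (fun x => ∫ ξ in Ioi x, h ξ) Filter.atTop (nhds 0) := by
  have : (fun x => ∫ ξ in Ioi x, h ξ)
      = fun x => (∫ ξ in Ioi (0:ℝ), h ξ) - ∫ ξ in (0:ℝ)..x, h ξ := funext (tail_eq hint)
  rw [this]
  have := (intervalIntegral_tendsto_integral_Ioi (μ := volume) 0 hint.integrableOn
    Filter.tendsto_id)
  simpa using Filter.Tendsto.const_sub (∫ ξ in Ioi (0:ℝ), h ξ) this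

theorem tail_hasDeriv (hint : Integrable h) (hc : Continuous h) (x : ℝ) :
    HasDerivAt (fun x => ∫ ξ in Ioi x, h ξ) (-(h x)) x := by
  have he : (fun x => ∫ ξ in Ioi x, h ξ)
      = fun x => (∫ ξ in Ioi (0:ℝ), h ξ) - ∫ ξ in (0:ℝ)..x, h ξ := funext (tail_eq hint)
  rw [he]
  have hd : HasDerivAt (fun x => ∫ ξ in (0:ℝ)..x, h ξ) (h x) x :=
    intervalIntegral.integral_hasDerivAt_right hint.intervalIntegrable
      (hc.stronglyMeasurable.stronglyMeasurableAtFilter) hc.continuousAt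
  exact hd.const_sub _
end Tail

namespace V18
variable (u₀ : SchwartzMap ℝ ℂ)

noncomputable def aa (x : ℝ) : ℝ := ‖u₀ x‖

theorem aa_int : Integrable (aa u₀) := u₀.integrable.norm
theorem aa_cont : Continuous (aa u₀) := u₀.continuous.norm
theorem aa_nonneg (x : ℝ) : 0 ≤ aa u₀ x := norm_nonneg _

noncomputable def W (x : ℝ) : ℝ := ∫ ξ in Ioi x, aa u₀ ξ

theorem W_nonneg (x : ℝ) : 0 ≤ W u₀ x :=
  setIntegral_nonneg measurableSet_Ioi fun ξ _ => aa_nonneg u₀ ξ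

noncomputable def W₀ : ℝ := ∫ ξ, aa u₀ ξ

theorem W_le (x : ℝ) : W u₀ x ≤ W₀ u₀ :=
  setIntegral_le_integral (aa_int u₀) (Filter.Eventually.of_forall fun ξ => aa_nonneg u₀ ξ)

theorem W_cont : Continuous (W u₀) := tail_cont (aa_int u₀)
theorem W_tendsto : Filter.Tendsto (W u₀) Filter.atTop (nhds 0) := tail_tendsto (aa_int u₀)
theorem W_hasDeriv (x : ℝ) : HasDerivAt (W u₀) (-(aa u₀ x)) x :=
  tail_hasDeriv (aa_int u₀) (aa_cont u₀) x

noncomputable def ew (x : ℝ) : ℝ := Real.exp (2 * W u₀ x)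

theorem ew_cont : Continuous (ew u₀) := Real.continuous_exp.comp (continuous_const.mul (W_cont u₀))
theorem ew_one_le (x : ℝ) : 1 ≤ ew u₀ x :=
  Real.one_le_exp (by linarith [W_nonneg u₀ x])
theorem ew_le (x : ℝ) : ew u₀ x ≤ Real.exp (2 * W₀ u₀) :=
  Real.exp_le_exp.2 (by linarith [W_le u₀ x])
theorem ew_pos (x : ℝ) : 0 < ew u₀ x := Real.exp_pos _

theorem ew_hasDeriv (x : ℝ) : HasDerivAt (ew u₀) (-2 * aa u₀ x * ew u₀ x) x := by
  have h1 : HasDerivAt (fun x => 2 * W u₀ x) (2 * -(aa u₀ x)) x := (W_hasDeriv u₀ x).const_mul 2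
  have h2 := h1.exp
  convert h2 using 1
  show -2 * aa u₀ x * Real.exp (2 * W u₀ x) = _
  ring
  rfl

theorem aew_int : Integrable (fun ξ => aa u₀ ξ * ew u₀ ξ) := by
  have := (aa_int u₀).bdd_mul (f := ew u₀) (c := Real.exp (2 * W₀ u₀)) (ew_cont u₀).aestronglyMeasurable
    (Filter.Eventually.of_forall fun x => by
      rw [Real.norm_eq_abs, abs_of_pos (ew_pos u₀ x)]; exact ew_le u₀ x)
  simpa [mul_comm] using this

theorem key_integral (x : ℝ) :
    ∫ ξ in Ioi x, aa u₀ ξ * ew u₀ ξ = (ew u₀ x - 1) / 2 := by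
  have hderiv : ∀ ξ ∈ Ici x, HasDerivAt (fun t => -(ew u₀ t) / 2) (aa u₀ ξ * ew u₀ ξ) ξ := by
    intro ξ _
    have := ((ew_hasDeriv u₀ ξ).neg).div_const 2
    refine this.congr_deriv ?_
    ring
  have hlim : Filter.Tendsto (fun t => -(ew u₀ t) / 2) Filter.atTop (nhds (-(1:ℝ)/2)) := by
    have : Filter.Tendsto (ew u₀) Filter.atTop (nhds (Real.exp (2 * 0))) :=
      (Real.continuous_exp.tendsto _).comp ((W_tendsto u₀).const_mul 2)
    simp only [mul_zero, Real.exp_zero] at this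
    exact (this.neg).div_const 2
  have := MeasureTheory.integral_Ioi_of_hasDerivAt_of_tendsto' hderiv
    ((aew_int u₀).integrableOn) hlim
  rw [this]; ring

theorem aew_mul_int (C : ℝ) :
    Integrable (fun ξ => aa u₀ ξ * ew u₀ ξ * C) := (aew_int u₀).mul_const C




variable (u₀ : SchwartzMap ℝ ℂ) (ζ : ℝ)
def sg : Fin 2 → Fin 2 → ℂ := ![![0, -1], ![1, 0]]
noncomputable def ph (i j : Fin 2) (x : ℝ) : ℂ :=
  Complex.exp (sg i j * (2 * Complex.I * ζ * x))
noncomputable def qq : Fin 2 → ℝ → ℂ := fun i ξ =>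
  if i = 0 then u₀ ξ else -(starRingEnd ℂ) (u₀ ξ)

theorem expms (a b m : ℂ) : Complex.exp a * m * Complex.exp b = Complex.exp (a + b) * m := by
  rw [Complex.exp_add]; ring

theorem Km_eq (G : ℝ → Matrix (Fin 2) (Fin 2) ℂ) (x ξ : ℝ) (i j : Fin 2) :
    Km u₀ (ζ : ℂ) G x ξ i j
      = ph ζ i j x * ph ζ i j (-ξ) * (qq u₀ i ξ * G ξ (i + 1) j) := by
  have hG : G ξ = !![G ξ 0 0, G ξ 0 1; G ξ 1 0, G ξ 1 1] := Matrix.eta_fin_two _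
  rw [Km, Pm, hG, Matrix.mul_fin_two, Matrix.mul_fin_two, Matrix.mul_fin_two]
  fin_cases i <;> fin_cases j <;>
      simp [ph, sg, qq, expms, ← Complex.exp_add] <;>
    · exact Or.inl (by congr 1; ring)



theorem ph_norm (i j : Fin 2) (x : ℝ) : ‖ph ζ i j x‖ = 1 := by
  fin_cases i <;> fin_cases j <;>
    simp [ph, sg, Complex.norm_exp]

theorem ph_cont (i j : Fin 2) : Continuous (ph ζ i j) :=
  Complex.continuous_exp.comp
    (continuous_const.mul (continuous_const.mul Complex.continuous_ofReal))

theorem ph_mul_neg (i j : Fin 2) (x : ℝ) : ph ζ i j x * ph ζ i j (-x) = 1 := by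
  rw [ph, ph, ← Complex.exp_add, ← Complex.exp_zero]
  congr 1
  push_cast
  ring

theorem ph_hasDeriv (i j : Fin 2) (x : ℝ) :
    HasDerivAt (ph ζ i j) (sg i j * (2 * Complex.I * ζ) * ph ζ i j x) x := by
  have hb : HasDerivAt (fun x : ℝ => (x : ℂ)) 1 x := Complex.ofRealCLM.hasDerivAt
  have h1 : HasDerivAt (fun x : ℝ => sg i j * (2 * Complex.I * ζ * x))
      (sg i j * (2 * Complex.I * ζ)) x := by
    simpa [mul_assoc] using (hb.const_mul (2 * Complex.I * (ζ:ℂ))).const_mul (sg i j)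
  have := h1.cexp
  refine this.congr_deriv ?_
  rw [ph]
  ring_nf

theorem qq_norm (i : Fin 2) (ξ : ℝ) : ‖qq u₀ i ξ‖ = ‖u₀ ξ‖ := by
  fin_cases i <;> simp [qq]

theorem qq_cont (i : Fin 2) : Continuous (qq u₀ i) := by
  fin_cases i <;> simp only [qq, if_true, if_false]
  · show Continuous (qq u₀ 0)
    rw [show qq u₀ 0 = ⇑u₀ from funext fun ξ => by simp [qq]]; exact u₀.continuous
  · show Continuous (qq u₀ 1)
    rw [show qq u₀ 1 = fun ξ => -(starRingEnd ℂ) (u₀ ξ) from funext fun ξ => by simp [qq]]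
    exact (Complex.continuous_conj.comp u₀.continuous).neg


end V18
open scoped NNReal

namespace V18
variable (u₀ : SchwartzMap ℝ ℂ) (ζ : ℝ)

abbrev X := BoundedContinuousFunction ℝ (Fin 2 → Fin 2 → ℂ)

noncomputable def hh (F : ℝ → Fin 2 → Fin 2 → ℂ) (i j : Fin 2) (ξ : ℝ) : ℂ :=
  ph ζ i j (-ξ) * (qq u₀ i ξ * (((ew u₀ ξ : ℝ) : ℂ) * F ξ (i + 1) j))

theorem hh_cont (F : X) (i j : Fin 2) : Continuous (hh u₀ ζ F i j) := by
  apply ((ph_cont ζ i j).comp continuous_neg).mul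
  apply (qq_cont u₀ i).mul
  apply (Complex.continuous_ofReal.comp (ew_cont u₀)).mul
  exact (continuous_apply j).comp ((continuous_apply (i + 1)).comp F.continuous)

theorem hh_bound (F : X) (i j : Fin 2) (ξ : ℝ) :
    ‖hh u₀ ζ F i j ξ‖ ≤ aa u₀ ξ * ew u₀ ξ * ‖F‖ := by
  rw [hh, norm_mul, norm_mul, norm_mul, ph_norm, qq_norm, one_mul]
  have h1 : ‖F ξ (i + 1) j‖ ≤ ‖F‖ :=
    le_trans (le_trans (norm_le_pi_norm (F ξ (i + 1)) j) (norm_le_pi_norm (F ξ) (i + 1)))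
      (F.norm_coe_le_norm ξ)
  have h2 : ‖((ew u₀ ξ : ℝ) : ℂ)‖ = ew u₀ ξ := by
    rw [Complex.norm_real, Real.norm_eq_abs, abs_of_pos (ew_pos u₀ ξ)]
  rw [h2, aa]
  calc ‖u₀ ξ‖ * (ew u₀ ξ * ‖F ξ (i+1) j‖) ≤ ‖u₀ ξ‖ * (ew u₀ ξ * ‖F‖) := by
        apply mul_le_mul_of_nonneg_left (mul_le_mul_of_nonneg_left h1 (ew_pos u₀ ξ).le)
          (norm_nonneg _)
    _ = ‖u₀ ξ‖ * ew u₀ ξ * ‖F‖ := by ring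

theorem hh_int (F : X) (i j : Fin 2) : Integrable (hh u₀ ζ F i j) := by
  refine Integrable.mono' ((aew_int u₀).mul_const ‖F‖) (hh_cont u₀ ζ F i j).aestronglyMeasurable ?_
  exact Filter.Eventually.of_forall (hh_bound u₀ ζ F i j)

theorem int_hh_norm_le (F : X) (i j : Fin 2) (x : ℝ) :
    ‖∫ ξ in Ioi x, hh u₀ ζ F i j ξ‖ ≤ (ew u₀ x - 1) / 2 * ‖F‖ := by
  have h1 : ‖∫ ξ in Ioi x, hh u₀ ζ F i j ξ‖ ≤ ∫ ξ in Ioi x, aa u₀ ξ * ew u₀ ξ * ‖F‖ := by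
    apply norm_integral_le_of_norm_le (((aew_int u₀).mul_const ‖F‖).integrableOn)
    exact Filter.Eventually.of_forall (hh_bound u₀ ζ F i j)
  rw [integral_mul_const, key_integral] at h1
  exact h1

noncomputable def Tent (F : X) (x : ℝ) (i j : Fin 2) : ℂ :=
  ((Real.exp (-(2 * W u₀ x)) : ℝ) : ℂ) *
    ((if i = j then (1:ℂ) else 0) - ph ζ i j x * ∫ ξ in Ioi x, hh u₀ ζ F i j ξ)

theorem Tent_cont (F : X) (i j : Fin 2) : Continuous (fun x => Tent u₀ ζ F x i j) := by
  apply Continuous.mul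
  · exact Complex.continuous_ofReal.comp
      (Real.continuous_exp.comp (continuous_const.mul (W_cont u₀)).neg)
  · exact continuous_const.sub ((ph_cont ζ i j).mul (tail_cont (hh_int u₀ ζ F i j)))

theorem exp_neg_eq (x : ℝ) : Real.exp (-(2 * W u₀ x)) = (ew u₀ x)⁻¹ := by
  rw [Real.exp_neg, ew]

theorem Tent_bound (F : X) (x : ℝ) (i j : Fin 2) :
    ‖Tent u₀ ζ F x i j‖ ≤ 1 + ‖F‖ / 2 := by
  have hw : 1 ≤ ew u₀ x := ew_one_le u₀ x
  have h0 : (0:ℝ) < ew u₀ x := ew_pos u₀ x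
  have h2 : ‖(if i = j then (1:ℂ) else 0) - ph ζ i j x * ∫ ξ in Ioi x, hh u₀ ζ F i j ξ‖
      ≤ 1 + (ew u₀ x - 1) / 2 * ‖F‖ := by
    refine le_trans (norm_sub_le _ _) (add_le_add ?_ ?_)
    · split <;> simp
    · rw [norm_mul, ph_norm, one_mul]
      exact int_hh_norm_le u₀ ζ F i j x
  rw [Tent, norm_mul, Complex.norm_real, Real.norm_eq_abs, abs_of_pos (Real.exp_pos _),
    exp_neg_eq]
  have hF : (0:ℝ) ≤ ‖F‖ := norm_nonneg _
  calc (ew u₀ x)⁻¹ * ‖_ - _‖ ≤ (ew u₀ x)⁻¹ * (1 + (ew u₀ x - 1) / 2 * ‖F‖) := by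
        exact mul_le_mul_of_nonneg_left h2 (inv_nonneg.2 h0.le)
    _ ≤ 1 + ‖F‖ / 2 := by
        rw [inv_mul_le_iff₀ h0]
        have : (1 + ‖F‖/2) * ew u₀ x = ew u₀ x + ‖F‖/2 * ew u₀ x := by ring
        nlinarith [mul_le_mul_of_nonneg_left hw (by positivity : (0:ℝ) ≤ ‖F‖/2)]

noncomputable def Φ (F : X) : X :=
  BoundedContinuousFunction.ofNormedAddCommGroup (fun x i j => Tent u₀ ζ F x i j)
    (continuous_pi fun i => continuous_pi fun j => Tent_cont u₀ ζ F i j)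
    (1 + ‖F‖ / 2)
    (fun x => (pi_norm_le_iff_of_nonneg (by positivity)).2 fun i =>
      (pi_norm_le_iff_of_nonneg (by positivity)).2 fun j => Tent_bound u₀ ζ F x i j)

theorem Φ_apply (F : X) (x : ℝ) (i j : Fin 2) : Φ u₀ ζ F x i j = Tent u₀ ζ F x i j := rfl

theorem hh_sub (F₁ F₂ : X) (i j : Fin 2) (ξ : ℝ) :
    hh u₀ ζ F₁ i j ξ - hh u₀ ζ F₂ i j ξ = hh u₀ ζ (F₁ - F₂) i j ξ := by
  simp only [hh, BoundedContinuousFunction.coe_sub, Pi.sub_apply]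
  ring

theorem Φ_contract : ContractingWith (1/2 : ℝ≥0) (Φ u₀ ζ) := by
  constructor
  · have h : ((1/2 : ℝ≥0) : ℝ) < 1 := by norm_num
    exact_mod_cast h
  · apply LipschitzWith.of_dist_le_mul
    intro F₁ F₂
    rw [BoundedContinuousFunction.dist_le (by positivity)]
    intro x
    rw [dist_eq_norm]
    refine (pi_norm_le_iff_of_nonneg (by positivity)).2 fun i => ?_
    rw [show ((Φ u₀ ζ F₁) x - (Φ u₀ ζ F₂) x) i = fun j => ((Φ u₀ ζ F₁) x - (Φ u₀ ζ F₂) x) i j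
      from rfl]
    refine (pi_norm_le_iff_of_nonneg (by positivity)).2 fun j => ?_
    rw [show ((Φ u₀ ζ F₁) x - (Φ u₀ ζ F₂) x) i j
        = Tent u₀ ζ F₁ x i j - Tent u₀ ζ F₂ x i j from rfl]
    have hieq : (∫ ξ in Ioi x, (hh u₀ ζ F₁ i j ξ - hh u₀ ζ F₂ i j ξ))
        = ∫ ξ in Ioi x, hh u₀ ζ (F₁ - F₂) i j ξ :=
      integral_congr_ae (Filter.Eventually.of_forall fun ξ => hh_sub u₀ ζ F₁ F₂ i j ξ)
    have key : Tent u₀ ζ F₁ x i j - Tent u₀ ζ F₂ x i j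
        = -(((Real.exp (-(2 * W u₀ x)) : ℝ) : ℂ) * (ph ζ i j x *
            ∫ ξ in Ioi x, hh u₀ ζ (F₁ - F₂) i j ξ)) := by
      rw [Tent, Tent, ← mul_sub,
        show ∀ a b c : ℂ, (a - b) - (a - c) = -(b - c) by intros; ring,
        ← mul_sub, ← integral_sub (hh_int u₀ ζ F₁ i j).integrableOn
          (hh_int u₀ ζ F₂ i j).integrableOn, hieq]
      ring
    rw [key, norm_neg, norm_mul, norm_mul, ph_norm, one_mul, Complex.norm_real,
      Real.norm_eq_abs, abs_of_pos (Real.exp_pos _), exp_neg_eq]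
    have h1 := int_hh_norm_le u₀ ζ (F₁ - F₂) i j x
    have h0 : (0:ℝ) < ew u₀ x := ew_pos u₀ x
    have hw : 1 ≤ ew u₀ x := ew_one_le u₀ x
    have hFn : ‖F₁ - F₂‖ = dist F₁ F₂ := (dist_eq_norm F₁ F₂).symm
    rw [hFn] at h1
    calc (ew u₀ x)⁻¹ * ‖∫ ξ in Ioi x, hh u₀ ζ (F₁ - F₂) i j ξ‖
        ≤ (ew u₀ x)⁻¹ * ((ew u₀ x - 1)/2 * dist F₁ F₂) :=
          mul_le_mul_of_nonneg_left h1 (inv_nonneg.2 h0.le)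
      _ ≤ (1/2 : ℝ≥0) * dist F₁ F₂ := by
          push_cast
          rw [inv_mul_le_iff₀ h0]
          nlinarith [dist_nonneg (x := F₁) (y := F₂)]

noncomputable def Fstar : X := (Φ_contract u₀ ζ).fixedPoint (Φ u₀ ζ)

theorem Fstar_fixed : Φ u₀ ζ (Fstar u₀ ζ) = Fstar u₀ ζ :=
  (Φ_contract u₀ ζ).fixedPoint_isFixedPt

noncomputable def Gm (x : ℝ) : Matrix (Fin 2) (Fin 2) ℂ :=
  Matrix.of fun i j => ((ew u₀ x : ℝ) : ℂ) * Fstar u₀ ζ x i j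

theorem Gm_apply (x : ℝ) (i j : Fin 2) :
    Gm u₀ ζ x i j = ((ew u₀ x : ℝ) : ℂ) * Fstar u₀ ζ x i j := rfl

theorem Gm_eq2 (x : ℝ) (i j : Fin 2) :
    Gm u₀ ζ x i j = (if i = j then (1:ℂ) else 0)
      - ph ζ i j x * ∫ ξ in Ioi x, hh u₀ ζ (Fstar u₀ ζ) i j ξ := by
  rw [Gm_apply]
  have h2 : Tent u₀ ζ (Fstar u₀ ζ) x i j = Fstar u₀ ζ x i j :=
    congrArg (fun F : X => F x i j) (Fstar_fixed u₀ ζ)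
  rw [← h2, Tent, ← mul_assoc, ← Complex.ofReal_mul, exp_neg_eq,
    mul_inv_cancel₀ (ne_of_gt (ew_pos u₀ x)), Complex.ofReal_one, one_mul]

end V18
namespace V18
variable (u₀ : SchwartzMap ℝ ℂ) (ζ : ℝ)

theorem Fstar_cont (i j : Fin 2) : Continuous (fun x => Fstar u₀ ζ x i j) :=
  (continuous_apply j).comp ((continuous_apply i).comp (Fstar u₀ ζ).continuous)

theorem Gm_cont (i j : Fin 2) : Continuous (fun x => Gm u₀ ζ x i j) := by
  simp only [Gm_apply]
  exact (Complex.continuous_ofReal.comp (ew_cont u₀)).mul (Fstar_cont u₀ ζ i j)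

theorem Km_Gm_eq (x ξ : ℝ) (i j : Fin 2) :
    Km u₀ (ζ : ℂ) (Gm u₀ ζ) x ξ i j = ph ζ i j x * hh u₀ ζ (Fstar u₀ ζ) i j ξ := by
  rw [Km_eq, hh, Gm_apply]
  ring

theorem Km_Gm_int (x : ℝ) (i j : Fin 2) :
    IntegrableOn (fun ξ => Km u₀ (ζ : ℂ) (Gm u₀ ζ) x ξ i j) (Ioi x) := by
  have : (fun ξ => Km u₀ (ζ : ℂ) (Gm u₀ ζ) x ξ i j)
      = fun ξ => ph ζ i j x * hh u₀ ζ (Fstar u₀ ζ) i j ξ :=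
    funext fun ξ => Km_Gm_eq u₀ ζ x ξ i j
  rw [this]
  exact ((hh_int u₀ ζ (Fstar u₀ ζ) i j).const_mul _).integrableOn

theorem Gm_eqn (x : ℝ) (i j : Fin 2) :
    Gm u₀ ζ x i j = (1 : Matrix (Fin 2) (Fin 2) ℂ) i j
      - ∫ ξ in Ioi x, Km u₀ (ζ : ℂ) (Gm u₀ ζ) x ξ i j := by
  have h1 : (∫ ξ in Ioi x, Km u₀ (ζ : ℂ) (Gm u₀ ζ) x ξ i j)
      = ph ζ i j x * ∫ ξ in Ioi x, hh u₀ ζ (Fstar u₀ ζ) i j ξ := by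
    rw [show (fun ξ => Km u₀ (ζ : ℂ) (Gm u₀ ζ) x ξ i j)
        = fun ξ => ph ζ i j x * hh u₀ ζ (Fstar u₀ ζ) i j ξ
      from funext fun ξ => Km_Gm_eq u₀ ζ x ξ i j]
    exact integral_const_mul _ _
  rw [h1, Matrix.one_apply, Gm_eq2]

theorem Gm_bound (x : ℝ) (i j : Fin 2) :
    ‖Gm u₀ ζ x i j‖ ≤ Real.exp (2 * W₀ u₀) * ‖Fstar u₀ ζ‖ := by
  rw [Gm_apply, norm_mul, Complex.norm_real, Real.norm_eq_abs, abs_of_pos (ew_pos u₀ x)]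
  have h1 : ‖Fstar u₀ ζ x i j‖ ≤ ‖Fstar u₀ ζ‖ :=
    le_trans (le_trans (norm_le_pi_norm _ j) (norm_le_pi_norm _ i))
      ((Fstar u₀ ζ).norm_coe_le_norm x)
  exact mul_le_mul (ew_le u₀ x) h1 (norm_nonneg _) (Real.exp_pos _).le

theorem Gm_sol : IsMatrixVolterraSol u₀ (ζ : ℂ) (Gm u₀ ζ) :=
  ⟨fun i j => (Gm_cont u₀ ζ i j).continuousOn,
   ⟨Real.exp (2 * W₀ u₀) * ‖Fstar u₀ ζ‖, fun x _ i j => Gm_bound u₀ ζ x i j⟩,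
   fun x _ i j => ⟨Km_Gm_int u₀ ζ x i j, Gm_eqn u₀ ζ x i j⟩⟩

theorem sol_unique (H G : ℝ → Matrix (Fin 2) (Fin 2) ℂ)
    (hH : IsMatrixVolterraSol u₀ (ζ : ℂ) H) (hG : IsMatrixVolterraSol u₀ (ζ : ℂ) G) :
    ∀ x ≥ (0:ℝ), H x = G x := by
  obtain ⟨-, ⟨CH, hCH⟩, hHeq⟩ := hH
  obtain ⟨-, ⟨CG, hCG⟩, hGeq⟩ := hG
  set C := CH + CG with hC
  have hC0 : 0 ≤ C := by
    have := hCH 0 le_rfl 0 0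
    have := hCG 0 le_rfl 0 0
    have := norm_nonneg (H 0 0 0)
    have := norm_nonneg (G 0 0 0)
    linarith
  have key : ∀ n : ℕ, ∀ x ≥ (0:ℝ), ∀ i j : Fin 2,
      ‖H x i j - G x i j‖ ≤ C * (1/2)^n * ew u₀ x := by
    intro n
    induction n with
    | zero =>
      intro x hx i j
      have h1 : ‖H x i j - G x i j‖ ≤ C := by
        refine le_trans (norm_sub_le _ _) ?_
        exact add_le_add (hCH x hx i j) (hCG x hx i j)
      calc ‖H x i j - G x i j‖ ≤ C := h1
        _ = C * 1 * 1 := by ring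
        _ ≤ C * (1/2)^0 * ew u₀ x := by
            rw [pow_zero]
            nlinarith [ew_one_le u₀ x]
    | succ n ih =>
      intro x hx i j
      have hKint := (hHeq x hx i j).1
      have hKint' := (hGeq x hx i j).1
      have hsub : H x i j - G x i j
          = -∫ ξ in Ioi x, (Km u₀ (ζ:ℂ) H x ξ i j - Km u₀ (ζ:ℂ) G x ξ i j) := by
        rw [integral_sub hKint hKint', (hHeq x hx i j).2, (hGeq x hx i j).2]
        ring
      rw [hsub, norm_neg]
      have hbound : ∀ ξ ∈ Ioi x, ‖Km u₀ (ζ:ℂ) H x ξ i j - Km u₀ (ζ:ℂ) G x ξ i j‖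
          ≤ aa u₀ ξ * ew u₀ ξ * (C * (1/2)^n) := by
        intro ξ hξ
        have hξ0 : (0:ℝ) ≤ ξ := le_trans hx (le_of_lt hξ)
        have hKd : Km u₀ (ζ:ℂ) H x ξ i j - Km u₀ (ζ:ℂ) G x ξ i j
            = ph ζ i j x * ph ζ i j (-ξ) * (qq u₀ i ξ * (H ξ (i+1) j - G ξ (i+1) j)) := by
          rw [Km_eq, Km_eq]
          ring
        rw [hKd, norm_mul, norm_mul, norm_mul, ph_norm, ph_norm, qq_norm, one_mul, one_mul]
        have := ih ξ hξ0 (i+1) j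
        calc ‖u₀ ξ‖ * ‖H ξ (i+1) j - G ξ (i+1) j‖
            ≤ ‖u₀ ξ‖ * (C * (1/2)^n * ew u₀ ξ) :=
              mul_le_mul_of_nonneg_left this (norm_nonneg _)
          _ = aa u₀ ξ * ew u₀ ξ * (C * (1/2)^n) := by rw [aa]; ring
      have h2 : ‖∫ ξ in Ioi x, (Km u₀ (ζ:ℂ) H x ξ i j - Km u₀ (ζ:ℂ) G x ξ i j)‖
          ≤ ∫ ξ in Ioi x, aa u₀ ξ * ew u₀ ξ * (C * (1/2)^n) := by
        refine norm_integral_le_of_norm_le (((aew_int u₀).mul_const _).integrableOn) ?_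
        exact (ae_restrict_iff' measurableSet_Ioi).2 (Filter.Eventually.of_forall hbound)
      rw [integral_mul_const, key_integral] at h2
      refine le_trans h2 ?_
      have hw : 1 ≤ ew u₀ x := ew_one_le u₀ x
      have hp : (0:ℝ) ≤ C * (1/2)^n := by positivity
      calc (ew u₀ x - 1)/2 * (C * (1/2)^n) ≤ ew u₀ x / 2 * (C * (1/2)^n) := by
            apply mul_le_mul_of_nonneg_right _ hp
            linarith
        _ = C * (1/2)^(n+1) * ew u₀ x := by ring
  intro x hx
  ext i j
  have hd : ‖H x i j - G x i j‖ ≤ 0 := by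
    have hlim : Filter.Tendsto (fun n : ℕ => C * (1/2:ℝ)^n * ew u₀ x)
        Filter.atTop (nhds 0) := by
      have h := tendsto_pow_atTop_nhds_zero_of_lt_one (by norm_num : (0:ℝ) ≤ 1/2)
        (by norm_num : (1/2:ℝ) < 1)
      have := (h.const_mul C).mul_const (ew u₀ x)
      simpa using this
    exact ge_of_tendsto hlim (Filter.Eventually.of_forall fun n => key n x hx i j)
  have := le_antisymm hd (norm_nonneg _)
  rwa [norm_eq_zero, sub_eq_zero] at this

end V18
namespace V18
variable (u₀ : SchwartzMap ℝ ℂ) (ζ : ℝ)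

noncomputable def AA (i j : Fin 2) (x : ℝ) : ℂ := ∫ ξ in Ioi x, hh u₀ ζ (Fstar u₀ ζ) i j ξ

theorem AA_hasDeriv (i j : Fin 2) (x : ℝ) :
    HasDerivAt (AA u₀ ζ i j) (-(hh u₀ ζ (Fstar u₀ ζ) i j x)) x :=
  tail_hasDeriv (hh_int u₀ ζ _ i j) (hh_cont u₀ ζ _ i j) x

theorem AA_tendsto (i j : Fin 2) :
    Filter.Tendsto (AA u₀ ζ i j) Filter.atTop (nhds 0) :=
  tail_tendsto (hh_int u₀ ζ _ i j)

theorem Gm_eq3 (x : ℝ) (i j : Fin 2) :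
    Gm u₀ ζ x i j = (if i = j then (1:ℂ) else 0) - ph ζ i j x * AA u₀ ζ i j x :=
  Gm_eq2 u₀ ζ x i j

theorem ph_mul_AA (x : ℝ) (i j : Fin 2) :
    ph ζ i j x * AA u₀ ζ i j x = (if i = j then (1:ℂ) else 0) - Gm u₀ ζ x i j := by
  have := Gm_eq3 u₀ ζ x i j
  linear_combination this

theorem ph_mul_hh (x : ℝ) (i j : Fin 2) :
    ph ζ i j x * hh u₀ ζ (Fstar u₀ ζ) i j x = qq u₀ i x * Gm u₀ ζ x (i+1) j := by
  rw [hh, ← mul_assoc, ph_mul_neg, one_mul, Gm_apply]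

theorem Gm_hasDeriv (x : ℝ) (i j : Fin 2) :
    HasDerivAt (fun x => Gm u₀ ζ x i j)
      (sg i j * (2 * Complex.I * ζ) * (Gm u₀ ζ x i j - (if i = j then (1:ℂ) else 0))
        + qq u₀ i x * Gm u₀ ζ x (i+1) j) x := by
  have h1 : HasDerivAt (fun x => ph ζ i j x * AA u₀ ζ i j x)
      (sg i j * (2 * Complex.I * ζ) * ph ζ i j x * AA u₀ ζ i j x
        + ph ζ i j x * -(hh u₀ ζ (Fstar u₀ ζ) i j x)) x :=
    (ph_hasDeriv ζ i j x).mul (AA_hasDeriv u₀ ζ i j x)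
  have h2 := h1.const_sub (if i = j then (1:ℂ) else 0)
  have h3 : (fun x => (if i = j then (1:ℂ) else 0) - ph ζ i j x * AA u₀ ζ i j x)
      = fun x => Gm u₀ ζ x i j := funext fun y => (Gm_eq3 u₀ ζ y i j).symm
  rw [h3] at h2
  refine h2.congr_deriv ?_
  have e1 := ph_mul_AA u₀ ζ x i j
  have e2 := ph_mul_hh u₀ ζ x i j
  linear_combination -(sg i j * (2 * Complex.I * (ζ:ℂ))) * e1 + e2

noncomputable def dd (x : ℝ) : ℂ :=
  Gm u₀ ζ x 0 0 * Gm u₀ ζ x 1 1 - Gm u₀ ζ x 0 1 * Gm u₀ ζ x 1 0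

theorem dd_hasDeriv (x : ℝ) : HasDerivAt (dd u₀ ζ) 0 x := by
  have h00 := Gm_hasDeriv u₀ ζ x 0 0
  have h01 := Gm_hasDeriv u₀ ζ x 0 1
  have h10 := Gm_hasDeriv u₀ ζ x 1 0
  have h11 := Gm_hasDeriv u₀ ζ x 1 1
  have h : HasDerivAt (fun y => Gm u₀ ζ y 0 0 * Gm u₀ ζ y 1 1 - Gm u₀ ζ y 0 1 * Gm u₀ ζ y 1 0) _ x :=
    (h00.mul h11).sub (h01.mul h10)
  have hdd : (fun y => Gm u₀ ζ y 0 0 * Gm u₀ ζ y 1 1 - Gm u₀ ζ y 0 1 * Gm u₀ ζ y 1 0)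
      = dd u₀ ζ := rfl
  rw [hdd] at h
  convert h using 1
  have e00 : (0 + 1 : Fin 2) = 1 := rfl
  have e11 : (1 + 1 : Fin 2) = 0 := rfl
  rw [e00, e11] at *
  simp only [sg, qq, Matrix.cons_val_zero, Matrix.cons_val_one, Matrix.head_cons,
    if_true, reduceIte, show ((0:Fin 2) = 1) ↔ False by decide,
    show ((1:Fin 2) = 0) ↔ False by decide, if_false, iff_false]
  ring
end V18
namespace V18
variable (u₀ : SchwartzMap ℝ ℂ) (ζ : ℝ)

theorem dd_const (x y : ℝ) : dd u₀ ζ x = dd u₀ ζ y :=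
  is_const_of_deriv_eq_zero (fun z => (dd_hasDeriv u₀ ζ z).differentiableAt)
    (fun z => (dd_hasDeriv u₀ ζ z).deriv) x y

theorem Gm_tendsto (i j : Fin 2) :
    Filter.Tendsto (fun x => Gm u₀ ζ x i j) Filter.atTop
      (nhds (if i = j then (1:ℂ) else 0)) := by
  rw [tendsto_iff_norm_sub_tendsto_zero]
  have heq : (fun x => ‖Gm u₀ ζ x i j - (if i = j then (1:ℂ) else 0)‖)
      = fun x => ‖AA u₀ ζ i j x‖ := by
    funext x
    rw [Gm_eq3]
    rw [show (if i = j then (1:ℂ) else 0) - ph ζ i j x * AA u₀ ζ i j x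
        - (if i = j then (1:ℂ) else 0) = -(ph ζ i j x * AA u₀ ζ i j x) by ring]
    rw [norm_neg, norm_mul, ph_norm, one_mul]
  rw [heq]
  simpa using (AA_tendsto u₀ ζ i j).norm

theorem dd_tendsto : Filter.Tendsto (dd u₀ ζ) Filter.atTop (nhds 1) := by
  have h := ((Gm_tendsto u₀ ζ 0 0).mul (Gm_tendsto u₀ ζ 1 1)).sub
    ((Gm_tendsto u₀ ζ 0 1).mul (Gm_tendsto u₀ ζ 1 0))
  show Filter.Tendsto (fun x => Gm u₀ ζ x 0 0 * Gm u₀ ζ x 1 1 - Gm u₀ ζ x 0 1 * Gm u₀ ζ x 1 0) _ _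
  simpa [show ((0:Fin 2) = 1) ↔ False by decide, show ((1:Fin 2) = 0) ↔ False by decide]
    using h

theorem dd_one (x : ℝ) : dd u₀ ζ x = 1 := by
  have h : Filter.Tendsto (dd u₀ ζ) Filter.atTop (nhds (dd u₀ ζ x)) :=
    Filter.Tendsto.congr (fun y => dd_const u₀ ζ x y) tendsto_const_nhds
  exact tendsto_nhds_unique h (dd_tendsto u₀ ζ)

theorem Gm_det (x : ℝ) : (Gm u₀ ζ x).det = 1 := by
  rw [Matrix.det_fin_two]
  exact dd_one u₀ ζ x

noncomputable def Hs (x : ℝ) : Matrix (Fin 2) (Fin 2) ℂ :=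
  !![(starRingEnd ℂ) (Gm u₀ ζ x 1 1), -(starRingEnd ℂ) (Gm u₀ ζ x 1 0);
     -(starRingEnd ℂ) (Gm u₀ ζ x 0 1), (starRingEnd ℂ) (Gm u₀ ζ x 0 0)]

theorem Km_Hs (x ξ : ℝ) (i j : Fin 2) :
    Km u₀ (ζ:ℂ) (Hs u₀ ζ) x ξ i j
      = (if i = j then (1:ℂ) else -1)
        * (starRingEnd ℂ) (Km u₀ (ζ:ℂ) (Gm u₀ ζ) x ξ (i+1) (j+1)) := by
  fin_cases i <;> fin_cases j <;>
  · rw [Km_eq, Km_eq]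
    simp [ph, sg, qq, Hs, ← Complex.exp_conj, _root_.map_mul, map_neg, map_ofNat,
      Complex.conj_I, Complex.conj_ofReal, Complex.conj_conj, Complex.ofReal_neg,
      show (0+1:Fin 2)=1 from rfl, show (1+1:Fin 2)=0 from rfl]

theorem integrable_conj' {μ : Measure ℝ} {f : ℝ → ℂ} (hf : Integrable f μ) :
    Integrable (fun x => (starRingEnd ℂ) (f x)) μ := by
  refine hf.norm.mono'
    (Complex.continuous_conj.comp_aestronglyMeasurable hf.aestronglyMeasurable) ?_
  exact Filter.Eventually.of_forall fun x => by simp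

theorem Hs00 (x : ℝ) : Hs u₀ ζ x 0 0 = (starRingEnd ℂ) (Gm u₀ ζ x 1 1) := by simp [Hs]
theorem Hs01 (x : ℝ) : Hs u₀ ζ x 0 1 = -(starRingEnd ℂ) (Gm u₀ ζ x 1 0) := by simp [Hs]
theorem Hs10 (x : ℝ) : Hs u₀ ζ x 1 0 = -(starRingEnd ℂ) (Gm u₀ ζ x 0 1) := by simp [Hs]
theorem Hs11 (x : ℝ) : Hs u₀ ζ x 1 1 = (starRingEnd ℂ) (Gm u₀ ζ x 0 0) := by simp [Hs]

theorem Hs_cont (i j : Fin 2) : Continuous (fun x => Hs u₀ ζ x i j) := by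
  fin_cases i <;> fin_cases j <;> simp only [Fin.zero_eta, Fin.mk_one, id_eq]
  · simp only [Hs00]; exact Complex.continuous_conj.comp (Gm_cont u₀ ζ 1 1)
  · simp only [Hs01]; exact (Complex.continuous_conj.comp (Gm_cont u₀ ζ 1 0)).neg
  · simp only [Hs10]; exact (Complex.continuous_conj.comp (Gm_cont u₀ ζ 0 1)).neg
  · simp only [Hs11]; exact Complex.continuous_conj.comp (Gm_cont u₀ ζ 0 0)

theorem Hs_bound (x : ℝ) (i j : Fin 2) :
    ‖Hs u₀ ζ x i j‖ ≤ Real.exp (2 * W₀ u₀) * ‖Fstar u₀ ζ‖ := by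
  fin_cases i <;> fin_cases j <;> simp only [Fin.zero_eta, Fin.mk_one, id_eq]
  · rw [Hs00, RCLike.norm_conj]; exact Gm_bound u₀ ζ x 1 1
  · rw [Hs01, norm_neg, RCLike.norm_conj]; exact Gm_bound u₀ ζ x 1 0
  · rw [Hs10, norm_neg, RCLike.norm_conj]; exact Gm_bound u₀ ζ x 0 1
  · rw [Hs11, RCLike.norm_conj]; exact Gm_bound u₀ ζ x 0 0

theorem Hs_sol : IsMatrixVolterraSol u₀ (ζ:ℂ) (Hs u₀ ζ) := by
  refine ⟨fun i j => (Hs_cont u₀ ζ i j).continuousOn,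
    ⟨Real.exp (2 * W₀ u₀) * ‖Fstar u₀ ζ‖, fun x _ i j => Hs_bound u₀ ζ x i j⟩,
    fun x hx i j => ?_⟩
  have hKint : IntegrableOn (fun ξ => Km u₀ (ζ:ℂ) (Hs u₀ ζ) x ξ i j) (Ioi x) := by
    rw [show (fun ξ => Km u₀ (ζ:ℂ) (Hs u₀ ζ) x ξ i j)
        = fun ξ => (if i = j then (1:ℂ) else -1)
            * (starRingEnd ℂ) (Km u₀ (ζ:ℂ) (Gm u₀ ζ) x ξ (i+1) (j+1))
      from funext fun ξ => Km_Hs u₀ ζ x ξ i j]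
    exact (integrable_conj' (Km_Gm_int u₀ ζ x (i+1) (j+1))).const_mul _
  refine ⟨hKint, ?_⟩
  have h1 : (∫ ξ in Ioi x, Km u₀ (ζ:ℂ) (Hs u₀ ζ) x ξ i j)
      = (if i = j then (1:ℂ) else -1)
        * (starRingEnd ℂ) (∫ ξ in Ioi x, Km u₀ (ζ:ℂ) (Gm u₀ ζ) x ξ (i+1) (j+1)) := by
    rw [show (fun ξ => Km u₀ (ζ:ℂ) (Hs u₀ ζ) x ξ i j)
        = fun ξ => (if i = j then (1:ℂ) else -1)
            * (starRingEnd ℂ) (Km u₀ (ζ:ℂ) (Gm u₀ ζ) x ξ (i+1) (j+1))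
      from funext fun ξ => Km_Hs u₀ ζ x ξ i j]
    rw [integral_const_mul, integral_conj]
  have h2 : (∫ ξ in Ioi x, Km u₀ (ζ:ℂ) (Gm u₀ ζ) x ξ (i+1) (j+1))
      = (1 : Matrix (Fin 2) (Fin 2) ℂ) (i+1) (j+1) - Gm u₀ ζ x (i+1) (j+1) := by
    have := Gm_eqn u₀ ζ x (i+1) (j+1)
    linear_combination this
  rw [h1, h2]
  fin_cases i <;> fin_cases j <;>
    simp [Hs, Matrix.one_apply, map_sub, Complex.conj_conj,
      show (0+1:Fin 2)=1 from rfl, show (1+1:Fin 2)=0 from rfl,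
      show ((0:Fin 2) = 1) ↔ False by decide, show ((1:Fin 2) = 0) ↔ False by decide]

theorem Hs_eq_Gm : ∀ x ≥ (0:ℝ), Hs u₀ ζ x = Gm u₀ ζ x :=
  sol_unique u₀ ζ (Hs u₀ ζ) (Gm u₀ ζ) (Hs_sol u₀ ζ) (Gm_sol u₀ ζ)

theorem Gm_symm₁ (x : ℝ) (hx : 0 ≤ x) :
    Gm u₀ ζ x 0 0 = (starRingEnd ℂ) (Gm u₀ ζ x 1 1) := by
  have h := congrFun (congrFun (Hs_eq_Gm u₀ ζ x hx) 0) 0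
  simpa [Hs] using h.symm

theorem Gm_symm₂ (x : ℝ) (hx : 0 ≤ x) :
    Gm u₀ ζ x 1 0 = -(starRingEnd ℂ) (Gm u₀ ζ x 0 1) := by
  have h := congrFun (congrFun (Hs_eq_Gm u₀ ζ x hx) 1) 0
  simpa [Hs] using h.symm

end V18


/-- for a Schwartz datum `u₀` and real spectral parameter `ζ`, the matrix
Volterra equation has a unique bounded continuous solution `G` on `[0,∞)`; it satisfies
`det G(x) = 1`, `G₁₁ = conj(G₂₂)` and `G₂₁ = −conj(G₁₂)`; consequently the spectral
functions `y(ζ) = G₂₂(0)` and `z(ζ) = G₁₂(0)` satisfy `|y(ζ)|² + |z(ζ)|² = 1`. -/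
theorem stmt_18 (u₀ : SchwartzMap ℝ ℂ) (ζ : ℝ) :
    ∃ G : ℝ → Matrix (Fin 2) (Fin 2) ℂ,
      IsMatrixVolterraSol u₀ (ζ : ℂ) G ∧
      (∀ H : ℝ → Matrix (Fin 2) (Fin 2) ℂ, IsMatrixVolterraSol u₀ (ζ : ℂ) H →
        ∀ x ≥ (0 : ℝ), H x = G x) ∧
      (∀ x ≥ (0 : ℝ), (G x).det = 1 ∧
        G x 0 0 = (starRingEnd ℂ) (G x 1 1) ∧ G x 1 0 = -(starRingEnd ℂ) (G x 0 1)) ∧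
      ‖G 0 1 1‖ ^ 2 + ‖G 0 0 1‖ ^ 2 = 1 := by
  refine ⟨V18.Gm u₀ ζ, V18.Gm_sol u₀ ζ, ?_, ?_, ?_⟩
  · intro H hH x hx
    exact V18.sol_unique u₀ ζ H (V18.Gm u₀ ζ) hH (V18.Gm_sol u₀ ζ) x hx
  · intro x hx
    exact ⟨V18.Gm_det u₀ ζ x, V18.Gm_symm₁ u₀ ζ x hx, V18.Gm_symm₂ u₀ ζ x hx⟩
  · have hdet := V18.Gm_det u₀ ζ 0
    rw [Matrix.det_fin_two] at hdet
    rw [V18.Gm_symm₁ u₀ ζ 0 le_rfl, V18.Gm_symm₂ u₀ ζ 0 le_rfl] at hdet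
    set a := V18.Gm u₀ ζ 0 1 1 with ha'
    set b := V18.Gm u₀ ζ 0 0 1 with hb'
    have ha : a * (starRingEnd ℂ) a = ((‖a‖ ^ 2 : ℝ) : ℂ) := by
      rw [Complex.mul_conj, Complex.normSq_eq_norm_sq]
    have hb : b * (starRingEnd ℂ) b = ((‖b‖ ^ 2 : ℝ) : ℂ) := by
      rw [Complex.mul_conj, Complex.normSq_eq_norm_sq]
    have h1 : ((‖a‖ ^ 2 + ‖b‖ ^ 2 : ℝ) : ℂ) = ((1 : ℝ) : ℂ) := by
      push_cast
      push_cast at ha hb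
      linear_combination hdet - ha - hb
    exact_mod_cast h1
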